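/- arXiv:2604.12915 — 6 statements merged into one kernel-verified Lean document; each statement's English description precedes it below -/
import Mathlib

section
/- Let G be a countable abelian group, H a Hilbert space, (U^g)_{g∈G} a unitary representation, and p, q ultrafilters on G. Then U^{p+q} = U^p ∘ U^q, where p+q is the ultrafilter sum defined by A ∈ p+q iff {g : −g+A ∈ q} ∈ p, and the operator limits are taken in the weak operator topology. In particular the operators {U^p : p ∈ βG} commute pairwise. -/
open Filter ContinuousLinearMap

/-- `V` is the weak-operator-topology limit of the operators `U g` along the
ultrafilter `p`. -/
def IsWOTLimit {G : Type*} {H : Type*} [NormedAddCommGroup H] [InnerProductSpace ℂ H]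
    (U : G → (H →L[ℂ] H)) (p : Ultrafilter G) (V : H →L[ℂ] H) : Prop :=
  ∀ f f' : H,
    Filter.Tendsto (fun g => (inner ℂ f (U g f') : ℂ)) (p : Filter G)
      (nhds (inner ℂ f (V f')))

/-- The sum `p + q` of two ultrafilters on an additive group:
`A ∈ p + q ↔ {g | −g + A ∈ q} ∈ p`. -/
def ultraAdd {G : Type*} [AddCommGroup G] (p q : Ultrafilter G) : Ultrafilter G :=
  p.bind fun g => q.map fun h => g + h

private lemma tendsto_bind_aux {α β X : Type*} [TopologicalSpace X] {p : Filter α}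
    {m : α → Filter β} {φ : β → X} {c : α → X} {L : X}
    (h1 : ∀ g, Filter.Tendsto φ (m g) (nhds (c g)))
    (h2 : Filter.Tendsto c p (nhds L)) :
    Filter.Tendsto φ (p.bind m) (nhds L) := by
  refine (nhds_basis_opens L).tendsto_right_iff.mpr ?_
  rintro s ⟨hLs, hso⟩
  have hp : ∀ᶠ g in p, c g ∈ s := h2 (hso.mem_nhds hLs)
  rw [Filter.eventually_bind]
  exact hp.mono fun g hg => (h1 g) (hso.mem_nhds hg)

/-- For a unitary representation of a countable abelian group,
`U^{p+q} = U^p ∘ U^q` (weak-operator ultrafilter limits); in particular all the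
operators `U^p`, `p ∈ βG`, commute pairwise. -/
theorem stmt_8 {G : Type*} [AddCommGroup G] [Countable G]
    {H : Type*} [NormedAddCommGroup H] [InnerProductSpace ℂ H] [CompleteSpace H]
    (U : G → (H →L[ℂ] H))
    (hrep : ∀ g h : G, U (g + h) = U g ∘L U h) (hzero : U 0 = 1)
    (hunit : ∀ g : G,
      ContinuousLinearMap.adjoint (U g) ∘L U g = 1 ∧
        U g ∘L ContinuousLinearMap.adjoint (U g) = 1)
    (p q : Ultrafilter G) (Up Uq Upq : H →L[ℂ] H)
    (hUp : IsWOTLimit U p Up) (hUq : IsWOTLimit U q Uq)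
    (hUpq : IsWOTLimit U (ultraAdd p q) Upq) :
    Upq = Up ∘L Uq ∧
      ∀ (r s : Ultrafilter G) (Vr Vs : H →L[ℂ] H),
        IsWOTLimit U r Vr → IsWOTLimit U s Vs → Vr ∘L Vs = Vs ∘L Vr := by
  constructor
  · -- Upq = Up ∘L Uq
    ext f'
    refine ext_inner_left ℂ fun f => ?_
    have hcoe : ((ultraAdd p q : Ultrafilter G) : Filter G)
        = Filter.bind (↑p) (fun g => Filter.map (fun h => g + h) ↑q) := rfl
    have hlim2 : Filter.Tendsto (fun g' => (inner ℂ f (U g' f') : ℂ))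
        ((ultraAdd p q : Ultrafilter G) : Filter G)
        (nhds (inner ℂ f ((Up ∘L Uq) f'))) := by
      rw [hcoe]
      refine tendsto_bind_aux (c := fun g => (inner ℂ f (U g (Uq f')) : ℂ)) ?_ ?_
      · intro g
        rw [Filter.tendsto_map'_iff]
        have key : (fun h => (inner ℂ f (U (g + h) f') : ℂ))
            = fun h => (inner ℂ (ContinuousLinearMap.adjoint (U g) f) (U h f') : ℂ) := by
          funext h
          rw [hrep, ContinuousLinearMap.adjoint_inner_left]
          rfl
        rw [show ((fun g' => (inner ℂ f (U g' f') : ℂ)) ∘ fun h => g + h)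
            = fun h => (inner ℂ f (U (g + h) f') : ℂ) from rfl, key]
        have := hUq (ContinuousLinearMap.adjoint (U g) f) f'
        rwa [ContinuousLinearMap.adjoint_inner_left] at this
      · exact hUp f (Uq f')
    exact tendsto_nhds_unique (hUpq f f') hlim2
  · -- commutativity
    intro r s Vr Vs hVr hVs
    -- first: Vr commutes with every U h
    have hcomm : ∀ (t : Ultrafilter G) (V : H →L[ℂ] H), IsWOTLimit U t V →
        ∀ h : G, V ∘L U h = U h ∘L V := by
      intro t V hV h
      ext f'
      refine ext_inner_left ℂ fun f => ?_
      have h1 : Filter.Tendsto (fun g => (inner ℂ f (U g (U h f')) : ℂ)) (↑t)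
          (nhds (inner ℂ f (V (U h f')))) := hV f (U h f')
      have h2 : Filter.Tendsto (fun g => (inner ℂ f (U g (U h f')) : ℂ)) (↑t)
          (nhds (inner ℂ f (U h (V f')))) := by
        have key : (fun g => (inner ℂ f (U g (U h f')) : ℂ))
            = fun g => (inner ℂ (ContinuousLinearMap.adjoint (U h) f) (U g f') : ℂ) := by
          funext g
          rw [ContinuousLinearMap.adjoint_inner_left]
          have : U g (U h f') = U h (U g f') := by
            rw [← ContinuousLinearMap.comp_apply, ← hrep, add_comm, hrep,
              ContinuousLinearMap.comp_apply]
          rw [this]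
        rw [key]
        have := hV (ContinuousLinearMap.adjoint (U h) f) f'
        rwa [ContinuousLinearMap.adjoint_inner_left] at this
      exact tendsto_nhds_unique h1 h2
    ext f'
    refine ext_inner_left ℂ fun f => ?_
    have h1 : Filter.Tendsto (fun h => (inner ℂ f (U h (Vr f')) : ℂ)) (↑s)
        (nhds (inner ℂ f (Vs (Vr f')))) := hVs f (Vr f')
    have h2 : Filter.Tendsto (fun h => (inner ℂ f (U h (Vr f')) : ℂ)) (↑s)
        (nhds (inner ℂ f (Vr (Vs f')))) := by
      have key : (fun h => (inner ℂ f (U h (Vr f')) : ℂ))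
          = fun h => (inner ℂ (ContinuousLinearMap.adjoint Vr f) (U h f') : ℂ) := by
        funext h
        have : U h (Vr f') = Vr (U h f') := by
          rw [← ContinuousLinearMap.comp_apply, ← hcomm r Vr hVr h,
            ContinuousLinearMap.comp_apply]
        rw [this, ContinuousLinearMap.adjoint_inner_left]
      rw [key]
      have := hVs (ContinuousLinearMap.adjoint Vr f) f'
      rwa [ContinuousLinearMap.adjoint_inner_left] at this
    exact tendsto_nhds_unique h2 h1
end

section
/- Let G be a countable abelian group, H a Hilbert space, (U^g) a unitary representation, and p an idempotent ultrafilter on G (p + p = p, p nonprincipal). Then U^p is an orthogonal projection: (U^p)² = U^p and (U^p)* = U^p. -/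
lemma inner_eq_zero_of_min {H : Type*} [NormedAddCommGroup H] [InnerProductSpace ℂ H]
    (y u : H) (h : ∀ t : ℂ, ‖y‖ ≤ ‖y + t • u‖) : (inner ℂ y u : ℂ) = 0 := by
  by_contra hc
  set c : ℂ := inner ℂ y u with hcdef
  have hcpos : 0 < Complex.normSq c := by
    simpa [Complex.normSq_pos] using hc
  set s : ℝ := 1 / (‖u‖ ^ 2 + 1) with hs
  have hspos : 0 < s := by positivity
  have hsu : s * (‖u‖ ^ 2 + 1) = 1 := by
    rw [hs]; field_simp
  set t : ℂ := -(s : ℂ) * (starRingEnd ℂ) c with ht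
  have h1 : ‖y‖ ^ 2 ≤ ‖y + t • u‖ ^ 2 := by
    exact pow_le_pow_left₀ (norm_nonneg y) (h t) 2
  have hexp : ‖y + t • u‖ ^ 2 = ‖y‖ ^ 2 + 2 * Complex.re (inner ℂ y (t • u)) + ‖t • u‖ ^ 2 :=
    @norm_add_sq ℂ _ _ _ _ y (t • u)
  have hre : Complex.re (inner ℂ y (t • u) : ℂ) = -s * Complex.normSq c := by
    rw [inner_smul_right, hcdef.symm, ht]
    have : -(s : ℂ) * (starRingEnd ℂ) c * c = -(s : ℂ) * (Complex.normSq c : ℂ) := by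
      rw [mul_assoc, Complex.normSq_eq_conj_mul_self]
    rw [this]
    simp
  have hnt : ‖t • u‖ ^ 2 = s ^ 2 * Complex.normSq c * ‖u‖ ^ 2 := by
    rw [norm_smul]
    have h2 : ‖t‖ ^ 2 = s ^ 2 * Complex.normSq c := by
      rw [ht]
      rw [norm_mul, norm_neg, Complex.norm_real, RingHomIsometric.norm_map,
        Real.norm_eq_abs, abs_of_pos hspos]
      have := Complex.sq_norm c
      nlinarith []
    nlinarith [norm_nonneg t, norm_nonneg u]
  nlinarith [mul_pos hspos hcpos, sq_nonneg ‖u‖]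



/-- For a unitary representation of a countable abelian group and a nonprincipal
idempotent ultrafilter `p` (`p + p = p`), the weak-operator limit `U^p` is an
orthogonal projection: `(U^p)² = U^p` and `(U^p)* = U^p`. -/
theorem stmt_9 {G : Type*} [AddCommGroup G] [Countable G]
    {H : Type*} [NormedAddCommGroup H] [InnerProductSpace ℂ H] [CompleteSpace H]
    (U : G → (H →L[ℂ] H))
    (hrep : ∀ g h : G, U (g + h) = U g ∘L U h) (hzero : U 0 = 1)
    (hunit : ∀ g : G,
      ContinuousLinearMap.adjoint (U g) ∘L U g = 1 ∧
        U g ∘L ContinuousLinearMap.adjoint (U g) = 1)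
    (p : Ultrafilter G) (hidem : ultraAdd p p = p)
    (hnp : ∀ g : G, p ≠ (pure g : Ultrafilter G))
    (Up : H →L[ℂ] H) (hUp : IsWOTLimit U p Up) :
    Up ∘L Up = Up ∧ ContinuousLinearMap.adjoint Up = Up := by
  classical
  -- each U g is an isometry
  have hUnorm : ∀ (g : G) (x : H), ‖U g x‖ = ‖x‖ := by
    intro g x
    have h2 : (inner ℂ (U g x) (U g x) : ℂ) = inner ℂ x x := by
      rw [← ContinuousLinearMap.adjoint_inner_left]
      have : ContinuousLinearMap.adjoint (U g) (U g x)
          = (ContinuousLinearMap.adjoint (U g) ∘L U g) x := rfl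
      rw [this, (hunit g).1]
      rfl
    have hx := @inner_self_eq_norm_sq_to_K ℂ _ _ _ _ (U g x)
    have hy := @inner_self_eq_norm_sq_to_K ℂ _ _ _ _ x
    rw [hx, hy, ← RCLike.ofReal_pow, ← RCLike.ofReal_pow] at h2
    have h5 : ‖U g x‖ ^ 2 = ‖x‖ ^ 2 := by exact_mod_cast h2
    nlinarith [norm_nonneg (U g x), norm_nonneg x]
  -- Up is a contraction
  have hPn : ∀ x : H, ‖Up x‖ ≤ ‖x‖ := by
    intro x
    have h := (hUp (Up x) x).norm
    have hb : ∀ g : G, ‖(inner ℂ (Up x) (U g x) : ℂ)‖ ≤ ‖Up x‖ * ‖x‖ := by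
      intro g
      calc ‖(inner ℂ (Up x) (U g x) : ℂ)‖ ≤ ‖Up x‖ * ‖U g x‖ := norm_inner_le_norm _ _
        _ = ‖Up x‖ * ‖x‖ := by rw [hUnorm]
    have hle : ‖(inner ℂ (Up x) (Up x) : ℂ)‖ ≤ ‖Up x‖ * ‖x‖ :=
      le_of_tendsto h (Filter.Eventually.of_forall hb)
    have hval : ‖(inner ℂ (Up x) (Up x) : ℂ)‖ = ‖Up x‖ ^ 2 := by
      rw [@inner_self_eq_norm_sq_to_K ℂ]
      simp [Complex.norm_real]
    rw [hval] at hle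
    rcases eq_or_lt_of_le (norm_nonneg (Up x)) with h0 | h0
    · rw [← h0]; exact norm_nonneg x
    · nlinarith []
  -- idempotence on the level of inner products
  have hinner : ∀ f f' : H, (inner ℂ f (Up (Up f')) : ℂ) = inner ℂ f (Up f') := by
    intro f f'
    have t1 : Filter.Tendsto (fun g => (inner ℂ f (U g (Up f')) : ℂ)) (p : Filter G)
        (nhds (inner ℂ f (Up (Up f')))) := hUp f (Up f')
    have t2 : Filter.Tendsto (fun x => (inner ℂ f (U x f') : ℂ))
        ((ultraAdd p p : Ultrafilter G) : Filter G) (nhds (inner ℂ f (Up (Up f')))) := by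
      rw [tendsto_nhds]
      intro s hso hsmem
      have hmain : ∀ᶠ g in (p : Filter G), ∀ᶠ h in (p : Filter G),
          (inner ℂ f (U (g + h) f') : ℂ) ∈ s := by
        filter_upwards [t1 (hso.mem_nhds hsmem)] with g hg
        have key : ∀ h : G, (inner ℂ (ContinuousLinearMap.adjoint (U g) f) (U h f') : ℂ)
            = inner ℂ f (U (g + h) f') := by
          intro h
          rw [ContinuousLinearMap.adjoint_inner_left, hrep]
          rfl
        have hlim : (inner ℂ (ContinuousLinearMap.adjoint (U g) f) (Up f') : ℂ)
            = inner ℂ f (U g (Up f')) := ContinuousLinearMap.adjoint_inner_left _ _ _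
        have t3 : Filter.Tendsto (fun h => (inner ℂ f (U (g + h) f') : ℂ)) (p : Filter G)
            (nhds (inner ℂ f (U g (Up f')))) := by
          have := hUp (ContinuousLinearMap.adjoint (U g) f) f'
          rw [hlim] at this
          simpa only [key] using this
        exact t3 (hso.mem_nhds hg)
      show (fun x => (inner ℂ f (U x f') : ℂ)) ⁻¹' s
          ∈ ((ultraAdd p p : Ultrafilter G) : Filter G)
      have hcoe : ((ultraAdd p p : Ultrafilter G) : Filter G)
          = Filter.bind ↑p fun g => Filter.map (fun h => g + h) ↑p := rfl
      rw [hcoe, Filter.mem_bind']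
      exact hmain
    rw [hidem] at t2
    exact tendsto_nhds_unique t2 (hUp f f')
  have hP2 : Up ∘L Up = Up := by
    apply ContinuousLinearMap.ext
    intro f'
    apply ext_inner_left ℂ
    intro f
    simpa using hinner f f'
  have hP2' : ∀ x : H, Up (Up x) = Up x := by
    intro x
    have := congrArg (fun (T : H →L[ℂ] H) => T x) hP2
    simpa using this
  -- orthogonality of range and kernel
  have horth : ∀ x y : H, (inner ℂ (Up x) (y - Up y) : ℂ) = 0 := by
    intro x y
    apply inner_eq_zero_of_min
    intro t
    have heq : Up (Up x + t • (y - Up y)) = Up x := by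
      simp [map_add, map_smul, map_sub, hP2']
    calc ‖Up x‖ = ‖Up (Up x + t • (y - Up y))‖ := by rw [heq]
      _ ≤ ‖Up x + t • (y - Up y)‖ := hPn _
  have hadj : ContinuousLinearMap.adjoint Up = Up := by
    apply ContinuousLinearMap.ext
    intro y
    apply ext_inner_left ℂ
    intro x
    rw [ContinuousLinearMap.adjoint_inner_right]
    have h1 : (inner ℂ (Up x) y : ℂ) = inner ℂ (Up x) (Up y) := by
      have := horth x y
      have hsplit : (inner ℂ (Up x) y : ℂ) = inner ℂ (Up x) (Up y) + inner ℂ (Up x) (y - Up y) := by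
        rw [← inner_add_right]
        congr 1
        abel
      rw [hsplit, this, add_zero]
    have h2 : (inner ℂ x (Up y) : ℂ) = inner ℂ (Up x) (Up y) := by
      have h3 := horth y x
      have h4 : (inner ℂ (x - Up x) (Up y) : ℂ) = 0 := by
        rw [← inner_conj_symm]
        rw [h3]
        simp
      have hsplit : (inner ℂ x (Up y) : ℂ) = inner ℂ (Up x) (Up y) + inner ℂ (x - Up x) (Up y) := by
        rw [← inner_add_left]
        congr 1
        abel
      rw [hsplit, h4, add_zero]
    rw [h1, h2]
  exact ⟨hP2, hadj⟩
end

section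
/- Let G be a countable abelian group, H a Hilbert space, (U^g) a unitary representation, and p an ultrafilter on G. If f ∈ H and there exists a finite set F ⊆ G and ε > 0 such that {g ∈ G : ∃ h ∈ F, ‖U^g f − U^h f‖ ≤ ε} ∈ p, then there exists h ∈ F with ‖U^p f − U^h f‖ ≤ ε. Consequently, if the orbit {U^g f : g ∈ G} is norm precompact, then ‖U^p f‖ = ‖f‖. -/
/-- For a unitary representation `U` of a countable abelian group on a complex
Hilbert space, an ultrafilter `p` and `f ∈ H`: if for a finite set `F` and `ε > 0`
the set `{g | ∃ h ∈ F, ‖U^g f − U^h f‖ ≤ ε}` belongs to `p`, then there is `h ∈ F`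
with `‖U^p f − U^h f‖ ≤ ε`.  Consequently, if the orbit `{U^g f}` is norm
precompact, then `‖U^p f‖ = ‖f‖`. -/
theorem stmt_10 {G : Type*} [AddCommGroup G] [Countable G]
    {H : Type*} [NormedAddCommGroup H] [InnerProductSpace ℂ H] [CompleteSpace H]
    (U : G → (H →L[ℂ] H))
    (hrep : ∀ g h : G, U (g + h) = U g ∘L U h) (hzero : U 0 = 1)
    (hunit : ∀ g : G,
      ContinuousLinearMap.adjoint (U g) ∘L U g = 1 ∧
        U g ∘L ContinuousLinearMap.adjoint (U g) = 1)
    (p : Ultrafilter G) (Up : H →L[ℂ] H) (hUp : IsWOTLimit U p Up) (f : H) :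
    (∀ (F : Finset G) (ε : ℝ), 0 < ε →
        {g : G | ∃ h ∈ F, ‖U g f - U h f‖ ≤ ε} ∈ p →
        ∃ h ∈ F, ‖Up f - U h f‖ ≤ ε) ∧
      (TotallyBounded (Set.range fun g => U g f) → ‖Up f‖ = ‖f‖) := by
  classical
  -- norms are preserved
  have hnorm : ∀ (g : G) (x : H), ‖U g x‖ = ‖x‖ := by
    intro g x
    have h1 : (ContinuousLinearMap.adjoint (U g)) (U g x) = x := by
      have := congrArg (fun T : H →L[ℂ] H => T x) (hunit g).1
      simpa using this
    have h2 := ContinuousLinearMap.adjoint_inner_right (U g) x (U g x)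
    rw [h1] at h2
    have h3 : ‖x‖ ^ 2 = ‖U g x‖ ^ 2 := by
      rw [← inner_self_eq_norm_sq (𝕜 := ℂ), ← inner_self_eq_norm_sq (𝕜 := ℂ), h2]
    nlinarith [norm_nonneg (U g x), norm_nonneg x]
  -- ‖Up f‖ ≤ ‖f‖
  have hUple : ‖Up f‖ ≤ ‖f‖ := by
    rcases eq_or_lt_of_le (norm_nonneg (Up f)) with h0 | h0
    · rw [← h0]; exact norm_nonneg f
    have ht : Filter.Tendsto (fun g => ‖(inner ℂ (Up f) (U g f) : ℂ)‖) (p : Filter G)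
        (nhds ‖(inner ℂ (Up f) (Up f) : ℂ)‖) := (hUp (Up f) f).norm
    have hb : ‖(inner ℂ (Up f) (Up f) : ℂ)‖ ≤ ‖Up f‖ * ‖f‖ := by
      refine le_of_tendsto ht (Filter.Eventually.of_forall fun g => ?_)
      calc ‖(inner ℂ (Up f) (U g f) : ℂ)‖ ≤ ‖Up f‖ * ‖U g f‖ := norm_inner_le_norm _ _
        _ = ‖Up f‖ * ‖f‖ := by rw [hnorm]
    have : ‖Up f‖ ^ 2 ≤ ‖Up f‖ * ‖f‖ := by
      rwa [inner_self_eq_norm_sq_to_K, norm_pow, RCLike.norm_ofReal, abs_norm] at hb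
    nlinarith
  have key : ∀ (F : Finset G) (ε : ℝ), 0 < ε →
      {g : G | ∃ h ∈ F, ‖U g f - U h f‖ ≤ ε} ∈ p →
      ∃ h ∈ F, ‖Up f - U h f‖ ≤ ε := by
    intro F ε hε hmem
    have hset : (⋃ h ∈ (F : Set G), {g : G | ‖U g f - U h f‖ ≤ ε}) ∈ p := by
      convert hmem using 1
      ext g; simp
    rw [Ultrafilter.finite_biUnion_mem_iff F.finite_toSet] at hset
    obtain ⟨h, hhF, hS⟩ := hset
    refine ⟨h, hhF, ?_⟩
    -- limit of real parts
    have htre : Filter.Tendsto (fun g => RCLike.re (inner ℂ (U h f) (U g f) : ℂ))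
        (p : Filter G) (nhds (RCLike.re (inner ℂ (U h f) (Up f) : ℂ))) :=
      (RCLike.continuous_re.continuousAt.tendsto).comp (hUp (U h f) f)
    have hlb : ‖f‖ ^ 2 - ε ^ 2 / 2 ≤ RCLike.re (inner ℂ (U h f) (Up f) : ℂ) := by
      refine ge_of_tendsto htre (Filter.Eventually.mono hS fun g hg => ?_)
      have hsq : ‖U g f - U h f‖ ^ 2 ≤ ε ^ 2 := by
        have := norm_nonneg (U g f - U h f)
        nlinarith
      have hexp : ‖U g f - U h f‖ ^ 2 =
          ‖f‖ ^ 2 - 2 * RCLike.re (inner ℂ (U g f) (U h f) : ℂ) + ‖f‖ ^ 2 := by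
        rw [norm_sub_sq (𝕜 := ℂ), hnorm, hnorm]
      have hsym : RCLike.re (inner ℂ (U g f) (U h f) : ℂ)
          = RCLike.re (inner ℂ (U h f) (U g f) : ℂ) := inner_re_symm _ _
      rw [hsym] at hexp
      linarith
    have hsym2 : RCLike.re (inner ℂ (Up f) (U h f) : ℂ)
        = RCLike.re (inner ℂ (U h f) (Up f) : ℂ) := inner_re_symm _ _
    have hfin : ‖Up f - U h f‖ ^ 2 ≤ ε ^ 2 := by
      have hexp : ‖Up f - U h f‖ ^ 2 =
          ‖Up f‖ ^ 2 - 2 * RCLike.re (inner ℂ (Up f) (U h f) : ℂ) + ‖U h f‖ ^ 2 :=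
        norm_sub_sq (𝕜 := ℂ) _ _
      rw [hnorm, hsym2] at hexp
      nlinarith [norm_nonneg (Up f), norm_nonneg f]
    nlinarith [norm_nonneg (Up f - U h f)]
  refine ⟨key, fun htb => ?_⟩
  have hclose : ∀ ε : ℝ, 0 < ε → |‖Up f‖ - ‖f‖| ≤ ε := by
    intro ε hε
    obtain ⟨t, hts, htfin, hcov⟩ := (totallyBounded_iff_subset.mp htb)
      _ (Metric.dist_mem_uniformity hε)
    set c : H → G := fun y => if hy : ∃ g : G, U g f = y then hy.choose else 0 with hc
    have hcspec : ∀ y ∈ t, U (c y) f = y := by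
      intro y hy
      obtain ⟨g, hg⟩ := hts hy
      rw [hc]; simp only
      rw [dif_pos ⟨g, hg⟩]
      exact (⟨g, hg⟩ : ∃ g : G, U g f = y).choose_spec
    obtain ⟨h, _, hUph⟩ := key (htfin.toFinset.image c) ε hε (by
      refine Filter.univ_mem' fun g => ?_
      have : U g f ∈ Set.range fun g => U g f := ⟨g, rfl⟩
      obtain ⟨y, hy⟩ := Set.mem_iUnion.mp (hcov this)
      obtain ⟨hyt, hd⟩ := Set.mem_iUnion.mp hy
      refine ⟨c y, Finset.mem_image_of_mem c (htfin.mem_toFinset.mpr hyt), ?_⟩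
      rw [hcspec y hyt]
      have : dist (U g f) y < ε := hd
      rw [dist_eq_norm] at this
      linarith)
    calc |‖Up f‖ - ‖f‖| = |‖Up f‖ - ‖U h f‖| := by rw [hnorm]
      _ ≤ ‖Up f - U h f‖ := abs_norm_sub_norm_le _ _
      _ ≤ ε := hUph
  by_contra hne
  have hpos : 0 < |‖Up f‖ - ‖f‖| := abs_pos.mpr (sub_ne_zero.mpr hne)
  have := hclose (|‖Up f‖ - ‖f‖| / 2) (by linarith)
  linarith
end

section
/- Let G be a countable abelian group, H a Hilbert space, (U^g) a unitary representation, and let p be an ultrafilter on G and ℓ ≥ 1. Then Ker(U^{p+p+⋯+p}) (ℓ summands) = Ker(U^p). Consequently, for 𝒰 ⊆ G* nonempty, (H, U) is 𝒰-mixing if and only if it is ℓ𝒰-mixing, where ℓ𝒰 = {p₁+⋯+p_ℓ : p_i ∈ 𝒰}. -/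
open ContinuousLinearMap Filter

local notation "⟪" x ", " y "⟫" => @inner ℂ _ _ x y

section Aux
variable {G : Type*} [AddCommGroup G]
    {H : Type*} [NormedAddCommGroup H] [InnerProductSpace ℂ H] [CompleteSpace H]
    {U : G → (H →L[ℂ] H)}

lemma my_adj (hrep : ∀ g h : G, U (g + h) = U g ∘L U h) (hzero : U 0 = 1)
    (hunit : ∀ g : G, adjoint (U g) ∘L U g = 1 ∧ U g ∘L adjoint (U g) = 1) (g : G) :
    adjoint (U g) = U (-g) := by
  have h1 : U g * U (-g) = 1 := by rw [mul_def, ← hrep, add_neg_cancel, hzero]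
  have h2 : adjoint (U g) * U g = 1 := (hunit g).1
  calc adjoint (U g) = adjoint (U g) * (U g * U (-g)) := by rw [h1, mul_one]
    _ = (adjoint (U g) * U g) * U (-g) := by rw [mul_assoc]
    _ = U (-g) := by rw [h2, one_mul]

variable (hrep : ∀ g h : G, U (g + h) = U g ∘L U h) (hzero : U 0 = 1)
    (hunit : ∀ g : G, adjoint (U g) ∘L U g = 1 ∧ U g ∘L adjoint (U g) = 1)
    {Ulim : Ultrafilter G → (H →L[ℂ] H)}
    (hUlim : ∀ p : Ultrafilter G, IsWOTLimit U p (Ulim p))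

include hrep hzero hunit

lemma my_inner_neg (g : G) (f x : H) : ⟪U (-g) f, x⟫ = ⟪f, U g x⟫ := by
  rw [← my_adj hrep hzero hunit, adjoint_inner_left]

lemma my_inner_neg' (g : G) (f x : H) : ⟪f, U (-g) x⟫ = ⟪U g f, x⟫ := by
  have h := my_inner_neg hrep hzero hunit (-g) f x
  rw [neg_neg] at h
  rw [← h]

lemma my_cross (g h : G) (f : H) :
    ⟪U (-g) f, U (-h) f⟫ = starRingEnd ℂ ⟪U g f, U h f⟫ := by
  rw [inner_conj_symm, my_inner_neg hrep hzero hunit g f (U (-h) f)]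
  have h2 := my_inner_neg hrep hzero hunit (-h) f (U g f)
  rw [neg_neg] at h2
  rw [h2, ← ContinuousLinearMap.comp_apply, ← hrep, ← ContinuousLinearMap.comp_apply, ← hrep,
    add_comm]

include hUlim

/-- `Ulim` of the negated ultrafilter is the adjoint. -/
lemma my_neg (p : Ultrafilter G) : Ulim (p.map Neg.neg) = adjoint (Ulim p) := by
  ext f'
  apply ext_inner_left ℂ
  intro f
  have h1 : Tendsto (fun g => ⟪f, U g f'⟫) (p.map Neg.neg : Filter G)
      (nhds ⟪f, Ulim (p.map Neg.neg) f'⟫) := hUlim _ f f'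
  rw [Ultrafilter.coe_map, tendsto_map'_iff] at h1
  have h2 : Tendsto (fun g : G => ⟪f, U (-g) f'⟫) (p : Filter G)
      (nhds ⟪Ulim p f, f'⟫) := by
    simp only [my_inner_neg' hrep hzero hunit]
    have h5 := (hUlim p f' f).star
    simp only [RCLike.star_def, inner_conj_symm] at h5
    exact h5
  have h6 : ⟪f, Ulim (p.map Neg.neg) f'⟫ = ⟪Ulim p f, f'⟫ := tendsto_nhds_unique h1 h2
  rw [h6, adjoint_inner_right]

/-- Composition law. -/
lemma my_comp (p q : Ultrafilter G) :
    Ulim (ultraAdd p q) = Ulim p ∘L Ulim q := by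
  ext f'
  apply ext_inner_left ℂ
  intro f
  have h1 : Tendsto (fun g => ⟪f, U g f'⟫) (ultraAdd p q : Filter G)
      (nhds ⟪f, Ulim (ultraAdd p q) f'⟫) := hUlim _ f f'
  have h2 : Tendsto (fun g => ⟪f, U g f'⟫) (ultraAdd p q : Filter G)
      (nhds ⟪f, Ulim p (Ulim q f')⟫) := by
    rw [Metric.tendsto_nhds]
    intro ε hε
    have hp : ∀ᶠ g in (p : Filter G),
        dist ⟪f, U g (Ulim q f')⟫ ⟪f, Ulim p (Ulim q f')⟫ < ε / 2 :=
      Metric.tendsto_nhds.1 (hUlim p f (Ulim q f')) (ε / 2) (by linarith)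
    have key : ∀ᶠ g in (p : Filter G), ∀ᶠ h in (q : Filter G),
        dist ⟪f, U (g + h) f'⟫ ⟪f, Ulim p (Ulim q f')⟫ < ε := by
      filter_upwards [hp] with g hg
      have hq2 : ∀ᶠ h in (q : Filter G),
          dist ⟪U (-g) f, U h f'⟫ ⟪U (-g) f, Ulim q f'⟫ < ε / 2 :=
        Metric.tendsto_nhds.1 (hUlim q (U (-g) f) f') (ε / 2) (by linarith)
      filter_upwards [hq2] with h hh
      have e1 : ⟪f, U (g + h) f'⟫ = ⟪U (-g) f, U h f'⟫ := by
        rw [my_inner_neg hrep hzero hunit, hrep]; rfl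
      have e2 : ⟪U (-g) f, Ulim q f'⟫ = ⟪f, U g (Ulim q f')⟫ :=
        my_inner_neg hrep hzero hunit g f _
      calc dist ⟪f, U (g + h) f'⟫ ⟪f, Ulim p (Ulim q f')⟫
          ≤ dist ⟪f, U (g + h) f'⟫ ⟪f, U g (Ulim q f')⟫
            + dist ⟪f, U g (Ulim q f')⟫ ⟪f, Ulim p (Ulim q f')⟫ := dist_triangle _ _ _
        _ < ε / 2 + ε / 2 := by
            rw [e1, ← e2]
            exact add_lt_add hh (by rwa [e2])
        _ = ε := by ring
    exact key
  exact tendsto_nhds_unique h1 h2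

/-- norm of adjoint value equals norm of value -/
lemma my_norm (p : Ultrafilter G) (f : H) :
    ‖adjoint (Ulim p) f‖ = ‖Ulim p f‖ := by
  set V := Ulim p with hV
  set W := Ulim (p.map Neg.neg) with hW
  have hWV : W = adjoint V := my_neg hrep hzero hunit hUlim p
  have key : ⟪f, V (W f)⟫ = ⟪V f, V f⟫ := by
    have pergrp : ∀ g : G, ⟪f, U g (W f)⟫ = starRingEnd ℂ ⟪U g f, V f⟫ := by
      intro g
      have h1 : Tendsto (fun h => ⟪U (-g) f, U h f⟫)
          ((p.map Neg.neg : Ultrafilter G) : Filter G)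
          (nhds ⟪U (-g) f, W f⟫) := hUlim _ _ f
      rw [Ultrafilter.coe_map, tendsto_map'_iff] at h1
      have h2 : Tendsto (fun h : G => ⟪U (-g) f, U (-h) f⟫) (p : Filter G)
          (nhds (starRingEnd ℂ ⟪U g f, V f⟫)) := by
        simp only [my_cross hrep hzero hunit]
        have h5 := (hUlim p (U g f) f).star
        simp only [RCLike.star_def] at h5
        exact h5
      have h6 : ⟪U (-g) f, W f⟫ = starRingEnd ℂ ⟪U g f, V f⟫ := tendsto_nhds_unique h1 h2
      rw [← my_inner_neg hrep hzero hunit g f (W f), h6]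
    have h3 : Tendsto (fun g => ⟪f, U g (W f)⟫) (p : Filter G)
        (nhds ⟪f, V (W f)⟫) := hUlim p f (W f)
    have h4 : Tendsto (fun g => ⟪f, U g (W f)⟫) (p : Filter G)
        (nhds ⟪V f, V f⟫) := by
      simp only [pergrp, inner_conj_symm]
      exact hUlim p (V f) f
    exact tendsto_nhds_unique h3 h4
  have hWf : ⟪W f, W f⟫ = ⟪V f, V f⟫ := by
    conv_lhs => rw [hWV]
    rw [adjoint_inner_left, ← hWV, key]
  rw [← hWV]
  have hsq : ‖W f‖ ^ 2 = ‖V f‖ ^ 2 := by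
    have h8 := hWf
    rw [inner_self_eq_norm_sq_to_K, inner_self_eq_norm_sq_to_K] at h8
    exact_mod_cast h8
  calc ‖W f‖ = Real.sqrt (‖W f‖ ^ 2) := (Real.sqrt_sq (norm_nonneg _)).symm
    _ = Real.sqrt (‖V f‖ ^ 2) := by rw [hsq]
    _ = ‖V f‖ := Real.sqrt_sq (norm_nonneg _)

end Aux

section Aux2
variable {G : Type*} [AddCommGroup G]
    {H : Type*} [NormedAddCommGroup H] [InnerProductSpace ℂ H] [CompleteSpace H]
    {U : G → (H →L[ℂ] H)}
    (hrep : ∀ g h : G, U (g + h) = U g ∘L U h) (hzero : U 0 = 1)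
    (hunit : ∀ g : G, adjoint (U g) ∘L U g = 1 ∧ U g ∘L adjoint (U g) = 1)
    {Ulim : Ultrafilter G → (H →L[ℂ] H)}
    (hUlim : ∀ p : Ultrafilter G, IsWOTLimit U p (Ulim p))

include hrep hzero hunit hUlim

lemma my_ker_sq (p : Ultrafilter G) (f : H) (h : Ulim p (Ulim p f) = 0) :
    Ulim p f = 0 := by
  set V := Ulim p with hV
  have hadj : adjoint V (V f) = 0 := by
    have hn : ‖adjoint V (V f)‖ = ‖V (V f)‖ := my_norm hrep hzero hunit hUlim p (V f)
    rw [h, norm_zero, norm_eq_zero] at hn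
    exact hn
  have : ⟪V f, V f⟫ = 0 := by
    rw [← adjoint_inner_left V f (V f), hadj, inner_zero_left]
  exact inner_self_eq_zero.mp this

lemma my_ker_pow (p : Ultrafilter G) (n : ℕ) (f : H)
    (h : ((Ulim p) ^ (n + 1)) f = 0) : Ulim p f = 0 := by
  induction n generalizing f with
  | zero => rwa [pow_one] at h
  | succ n ih =>
    have h2 : ((Ulim p) ^ (n + 1)) (Ulim p f) = 0 := by
      rw [← ContinuousLinearMap.mul_apply, ← pow_succ]
      exact h
    exact my_ker_sq hrep hzero hunit hUlim p f (ih _ h2)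

lemma my_fold (ℓ : ℕ) (p q : Ultrafilter G) :
    Ulim ((List.replicate ℓ p).foldl ultraAdd q) = Ulim q ∘L (Ulim p) ^ ℓ := by
  induction ℓ generalizing q with
  | zero =>
    simp only [List.replicate, List.foldl_nil, pow_zero]
    rw [← mul_def, mul_one]
  | succ n ih =>
    rw [List.replicate_succ, List.foldl_cons, ih (ultraAdd q p),
      my_comp hrep hzero hunit hUlim q p, ← mul_def, ← mul_def, ← mul_def, mul_assoc,
      ← pow_succ']

lemma my_kill (l : List (Ultrafilter G)) (q : Ultrafilter G)
    (hq : ∀ f : H, Ulim q f = 0) (f : H) : Ulim (l.foldl ultraAdd q) f = 0 := by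
  induction l generalizing q with
  | nil => exact hq f
  | cons a t ih =>
    rw [List.foldl_cons]
    refine ih (ultraAdd q a) (fun f => ?_)
    rw [my_comp hrep hzero hunit hUlim q a]
    exact hq _

end Aux2

/-- For a unitary representation of a countable abelian group:
`Ker U^{p+⋯+p}` (any number `ℓ ≥ 1` of summands) equals `Ker U^p`; consequently,
for any nonempty set `𝒰` of nonprincipal ultrafilters and any `ℓ ≥ 1`, being
`𝒰`-mixing is equivalent to being `ℓ𝒰`-mixing. -/
theorem stmt_12 {G : Type*} [AddCommGroup G] [Countable G]
    {H : Type*} [NormedAddCommGroup H] [InnerProductSpace ℂ H] [CompleteSpace H]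
    (U : G → (H →L[ℂ] H))
    (hrep : ∀ g h : G, U (g + h) = U g ∘L U h) (hzero : U 0 = 1)
    (hunit : ∀ g : G,
      ContinuousLinearMap.adjoint (U g) ∘L U g = 1 ∧
        U g ∘L ContinuousLinearMap.adjoint (U g) = 1)
    (Ulim : Ultrafilter G → (H →L[ℂ] H))
    (hUlim : ∀ p : Ultrafilter G, IsWOTLimit U p (Ulim p)) :
    (∀ (p : Ultrafilter G) (ℓ : ℕ),
        LinearMap.ker ((Ulim ((List.replicate ℓ p).foldl ultraAdd p) : H →ₗ[ℂ] H)) =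
          LinearMap.ker ((Ulim p : H →ₗ[ℂ] H))) ∧
      ∀ (𝒰 : Set (Ultrafilter G)) (ℓ : ℕ), 𝒰.Nonempty → 1 ≤ ℓ →
        (∀ p ∈ 𝒰, ∀ g : G, p ≠ (pure g : Ultrafilter G)) →
        ((∀ q ∈ 𝒰, ∀ f : H, Ulim q f = 0) ↔
          (∀ q ∈ 𝒰, ∀ l : List (Ultrafilter G), l.length + 1 = ℓ →
            (∀ r ∈ l, r ∈ 𝒰) → ∀ f : H, Ulim (l.foldl ultraAdd q) f = 0)) := by
  constructor
  · intro p ℓ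
    rw [my_fold hrep hzero hunit hUlim ℓ p p]
    ext f
    simp only [LinearMap.mem_ker, ContinuousLinearMap.coe_coe]
    have hpow : (Ulim p ∘L (Ulim p) ^ ℓ) f = ((Ulim p) ^ (ℓ + 1)) f := by
      rw [← mul_def, ← pow_succ']
    rw [hpow]
    constructor
    · exact my_ker_pow hrep hzero hunit hUlim p ℓ f
    · intro hf
      rw [pow_succ, ContinuousLinearMap.mul_apply, hf, map_zero]
  · intro 𝒰 ℓ _ hℓ _
    constructor
    · intro hmix q hq l _ _ f
      exact my_kill hrep hzero hunit hUlim l q (hmix q hq) f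
    · intro hmix q hq f
      obtain ⟨n, rfl⟩ : ∃ n, ℓ = n + 1 := ⟨ℓ - 1, (Nat.succ_pred_eq_of_pos hℓ).symm⟩
      have hl := hmix q hq (List.replicate n q) (by simp)
        (fun r hr => (List.eq_of_mem_replicate hr) ▸ hq)
      have h2 := hl f
      rw [my_fold hrep hzero hunit hUlim n q q] at h2
      have h3 : ((Ulim q) ^ (n + 1)) f = 0 := by
        rw [pow_succ', mul_def]
        exact h2
      exact my_ker_pow hrep hzero hunit hUlim q n f h3
end

section
/- Let G be a countable abelian group, H a Hilbert space, (U^g) a unitary representation, and p an ultrafilter on G. Then Ker(U^{−p+p}) = Ker(U^p). Consequently, (H,U) is 𝒰-mixing if and only if it is Δ(𝒰)-mixing, where Δ(𝒰) = {−p+p : p ∈ 𝒰}. -/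
/-- For a unitary representation of a countable abelian group:
`Ker U^{−p+p} = Ker U^p` for every ultrafilter `p`; consequently, for any set `𝒰`
of ultrafilters, being `𝒰`-mixing is equivalent to being `Δ(𝒰)`-mixing, where
`Δ(𝒰) = {−p+p : p ∈ 𝒰}`. -/
theorem stmt_13 {G : Type*} [AddCommGroup G] [Countable G]
    {H : Type*} [NormedAddCommGroup H] [InnerProductSpace ℂ H] [CompleteSpace H]
    (U : G → (H →L[ℂ] H))
    (hrep : ∀ g h : G, U (g + h) = U g ∘L U h) (hzero : U 0 = 1)
    (hunit : ∀ g : G,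
      ContinuousLinearMap.adjoint (U g) ∘L U g = 1 ∧
        U g ∘L ContinuousLinearMap.adjoint (U g) = 1)
    (Ulim : Ultrafilter G → (H →L[ℂ] H))
    (hUlim : ∀ p : Ultrafilter G, IsWOTLimit U p (Ulim p)) :
    (∀ p : Ultrafilter G,
        LinearMap.ker ((Ulim (ultraAdd (Ultrafilter.map Neg.neg p) p)) : H →ₗ[ℂ] H) =
          LinearMap.ker ((Ulim p) : H →ₗ[ℂ] H)) ∧
      ∀ 𝒰 : Set (Ultrafilter G),
        ((∀ q ∈ 𝒰, ∀ f : H, Ulim q f = 0) ↔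
          (∀ q ∈ 𝒰, ∀ f : H, Ulim (ultraAdd (Ultrafilter.map Neg.neg q) q) f = 0)) := by
  -- U (-a) is the adjoint of U a
  have hadj : ∀ a : G, ContinuousLinearMap.adjoint (U (-a)) = U a := by
    intro a
    have h1 : U a ∘L U (-a) = 1 := by
      rw [← hrep]; simp [hzero]
    calc ContinuousLinearMap.adjoint (U (-a))
        = (U a ∘L U (-a)) ∘L ContinuousLinearMap.adjoint (U (-a)) := by rw [h1, ContinuousLinearMap.one_def, ContinuousLinearMap.id_comp]
      _ = U a ∘L (U (-a) ∘L ContinuousLinearMap.adjoint (U (-a))) := by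
          rw [ContinuousLinearMap.comp_assoc]
      _ = U a := by rw [(hunit (-a)).2, ContinuousLinearMap.one_def, ContinuousLinearMap.comp_id]
  -- the key identity: Ulim (−p+p) = (Ulim p)† ∘ Ulim p
  have key : ∀ p : Ultrafilter G,
      Ulim (ultraAdd (Ultrafilter.map Neg.neg p) p)
        = ContinuousLinearMap.adjoint (Ulim p) ∘L Ulim p := by
    intro p
    set q := ultraAdd (Ultrafilter.map Neg.neg p) p with hq
    set V := Ulim p with hV
    ext f'
    apply ext_inner_left ℂ
    intro f
    have h1 := hUlim q f f'
    have h2 : Filter.Tendsto (fun g => (inner ℂ f (U g f') : ℂ)) (q : Filter G)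
        (nhds (inner ℂ (V f) (V f'))) := by
      -- inner limit: for fixed a, b ↦ ⟪U a f, U b f'⟫ → ⟪U a f, V f'⟫
      -- outer limit: a ↦ ⟪U a f, V f'⟫ → ⟪V f, V f'⟫
      have hL : Filter.Tendsto (fun a => (inner ℂ (U a f) (V f') : ℂ)) (p : Filter G)
          (nhds (inner ℂ (V f) (V f'))) := by
        have h := (Complex.continuous_conj.tendsto _).comp (hUlim p (V f') f)
        simpa [Function.comp_def, ← hV] using h
      rw [Metric.tendsto_nhds]
      intro ε hε
      have hcoe : (q : Filter G)
          = Filter.bind ((Ultrafilter.map Neg.neg p : Ultrafilter G) : Filter G)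
              (fun g => ((Ultrafilter.map (fun h => g + h) p : Ultrafilter G) : Filter G)) := rfl
      rw [hcoe, Filter.eventually_bind, Ultrafilter.coe_map, Filter.eventually_map]
      have houter := (Metric.tendsto_nhds.mp hL) (ε / 2) (by linarith)
      filter_upwards [houter] with a ha
      have hinner := (Metric.tendsto_nhds.mp (hUlim p (U a f) f')) (ε / 2) (by linarith)
      rw [Ultrafilter.coe_map, Filter.eventually_map]
      filter_upwards [hinner] with b hb
      have hid : (inner ℂ f (U (-a + b) f') : ℂ) = inner ℂ (U a f) (U b f') := by
        rw [hrep, ContinuousLinearMap.comp_apply, ← hadj a,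
          ContinuousLinearMap.adjoint_inner_left]
      rw [hid]
      calc dist (inner ℂ (U a f) (U b f') : ℂ) (inner ℂ (V f) (V f'))
          ≤ dist (inner ℂ (U a f) (U b f') : ℂ) (inner ℂ (U a f) (V f'))
            + dist (inner ℂ (U a f) (V f') : ℂ) (inner ℂ (V f) (V f')) := dist_triangle _ _ _
        _ < ε / 2 + ε / 2 := add_lt_add hb ha
        _ = ε := by ring
    have := tendsto_nhds_unique h1 h2
    rw [this, ContinuousLinearMap.comp_apply, ContinuousLinearMap.adjoint_inner_right]
  -- kernels agree
  have hker : ∀ p : Ultrafilter G,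
      LinearMap.ker ((Ulim (ultraAdd (Ultrafilter.map Neg.neg p) p)) : H →ₗ[ℂ] H)
        = LinearMap.ker ((Ulim p) : H →ₗ[ℂ] H) := by
    intro p
    rw [key p]
    ext x
    simp only [LinearMap.mem_ker, ContinuousLinearMap.coe_comp', Function.comp_apply,
      ContinuousLinearMap.coe_coe]
    constructor
    · intro hx
      have : (inner ℂ (Ulim p x) (Ulim p x) : ℂ) = 0 := by
        rw [← ContinuousLinearMap.adjoint_inner_right, hx, inner_zero_right]
      exact inner_self_eq_zero.mp this
    · intro hx
      rw [hx, map_zero]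
  refine ⟨hker, fun 𝒰 => ?_⟩
  constructor <;> intro h q hq f
  · have : f ∈ LinearMap.ker ((Ulim (ultraAdd (Ultrafilter.map Neg.neg q) q)) : H →ₗ[ℂ] H) := by
      rw [hker q]; exact h q hq f
    exact this
  · have : f ∈ LinearMap.ker ((Ulim q) : H →ₗ[ℂ] H) := by
      rw [← hker q]; exact h q hq f
    exact this
end

section
/- Let G be a countable abelian group, H a Hilbert space, (U^g) a unitary representation, and let (g_k) be a sequence in G tending to infinity (leaving every finite set). Suppose f ∈ H satisfies U^{g_k} f → f weakly. Then there exists a nonprincipal idempotent ultrafilter p on G with U^p f = f. -/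
attribute [local instance] Ultrafilter.add Ultrafilter.addSemigroup

open Filter ContinuousLinearMap in
lemma eventually_ultraAdd {G : Type*} [AddCommGroup G] (p q : Ultrafilter G) (r : G → Prop) :
    (∀ᶠ m in ↑(ultraAdd p q), r m) ↔ ∀ᶠ g in ↑p, ∀ᶠ h in ↑q, r (g + h) := by
  have hcoe : ((ultraAdd p q : Ultrafilter G) : Filter G)
      = Filter.bind (p : Filter G) (fun g => Filter.map (fun h => g + h) (q : Filter G)) := rfl
  rw [hcoe, Filter.eventually_bind]
  simp [Filter.eventually_map]

open Filter in
lemma ultraAdd_eq_add {G : Type*} [AddCommGroup G] (p q : Ultrafilter G) :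
    ultraAdd p q = p + q := by
  refine Ultrafilter.coe_inj.mp (Filter.ext' fun r => ?_)
  rw [eventually_ultraAdd, Ultrafilter.eventually_add]

/-- If `(g_k)` tends to infinity in the countable abelian group `G` (it leaves every
finite set) and `f ∈ H` is rigid along `(g_k)` (i.e. `U^{g_k} f → f` weakly), then
there is a nonprincipal idempotent ultrafilter `p` on `G` with `U^p f = f`. -/
theorem stmt_14 {G : Type*} [AddCommGroup G] [Countable G]
    {H : Type*} [NormedAddCommGroup H] [InnerProductSpace ℂ H] [CompleteSpace H]
    (U : G → (H →L[ℂ] H))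
    (hrep : ∀ g h : G, U (g + h) = U g ∘L U h) (hzero : U 0 = 1)
    (hunit : ∀ g : G,
      ContinuousLinearMap.adjoint (U g) ∘L U g = 1 ∧
        U g ∘L ContinuousLinearMap.adjoint (U g) = 1)
    (Ulim : Ultrafilter G → (H →L[ℂ] H))
    (hUlim : ∀ p : Ultrafilter G, IsWOTLimit U p (Ulim p))
    (gseq : ℕ → G) (hgseq : ∀ F : Finset G, {k : ℕ | gseq k ∈ F}.Finite)
    (f : H)
    (hrigid : ∀ f' : H,
      Filter.Tendsto (fun k => (inner ℂ f' (U (gseq k) f) : ℂ)) Filter.atTop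
        (nhds (inner ℂ f' f))) :
    ∃ p : Ultrafilter G, (∀ x : G, p ≠ (pure x : Ultrafilter G)) ∧
      ultraAdd p p = p ∧ Ulim p f = f := by
  classical
  open Filter ContinuousLinearMap in
  -- the matrix coefficient functions
  set φ : H → G → ℂ := fun f' g => inner ℂ f' (U g f) with hφ
  -- norm preservation
  have hnorm : ∀ (g : G) (v : H), ‖U g v‖ = ‖v‖ := by
    intro g v
    have h1 : (inner ℂ (U g v) (U g v) : ℂ) = inner ℂ v v := by
      have h := ContinuousLinearMap.adjoint_inner_left (U g) v (U g v)
      -- h : ⟪adjoint (U g) (U g v), v⟫ = ⟪U g v, U g v⟫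
      have h2 : ContinuousLinearMap.adjoint (U g) (U g v)
          = (ContinuousLinearMap.adjoint (U g) ∘L U g) v := rfl
      rw [h2, (hunit g).1] at h
      exact h.symm
    have h3 : RCLike.re (inner ℂ (U g v) (U g v) : ℂ) = RCLike.re (inner ℂ v v : ℂ) := by
      rw [h1]
    rw [inner_self_eq_norm_sq (𝕜 := ℂ), inner_self_eq_norm_sq (𝕜 := ℂ)] at h3
    nlinarith [norm_nonneg (U g v), norm_nonneg v]
  -- bound on matrix coefficients
  have hbound : ∀ (f' : H) (g : G), ‖φ f' g‖ ≤ ‖f'‖ * ‖f‖ := by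
    intro f' g
    calc ‖φ f' g‖ ≤ ‖f'‖ * ‖U g f‖ := norm_inner_le_norm _ _
    _ = ‖f'‖ * ‖f‖ := by rw [hnorm]
  have hbound0 : ∀ f' : H, ‖(inner ℂ f' f : ℂ)‖ ≤ ‖f'‖ * ‖f‖ := fun f' =>
    norm_inner_le_norm _ _
  -- the rigidity condition as a tendsto property
  set Vprop : Ultrafilter G → Prop :=
    fun p => ∀ f' : H, Filter.Tendsto (φ f') (p : Filter G) (nhds (inner ℂ f' f)) with hVprop
  have hViff : ∀ p : Ultrafilter G, Vprop p ↔ Ulim p f = f := by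
    intro p
    constructor
    · intro h
      refine ext_inner_left ℂ fun f' => ?_
      exact tendsto_nhds_unique (hUlim p f' f) (h f')
    · intro h f'
      have := hUlim p f' f
      rwa [h] at this
  -- the subsemigroup
  set S : Set (Ultrafilter G) :=
    {p | (∀ x : G, ({x}ᶜ : Set G) ∈ p) ∧ Vprop p} with hS
  -- S is closed
  have hSclosed : IsClosed S := by
    have h1 : S = (⋂ x : G, {p : Ultrafilter G | ({x}ᶜ : Set G) ∈ p}) ∩
        ⋂ f' : H, {p : Ultrafilter G |
          Filter.Tendsto (φ f') (p : Filter G) (nhds (inner ℂ f' f))} := by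
      ext p; simp [hS, hVprop, Set.mem_iInter]
    rw [h1]
    refine IsClosed.inter (isClosed_iInter fun x => ultrafilter_isClosed_basic _) ?_
    refine isClosed_iInter fun f' => ?_
    -- use the extension to the closed ball
    set r : ℝ := ‖f'‖ * ‖f‖ with hr
    set B : Set ℂ := Metric.closedBall 0 r with hB
    have hBcompact : IsCompact B := isCompact_closedBall 0 r
    haveI : CompactSpace B := isCompact_iff_compactSpace.mp hBcompact
    have hmem : ∀ g : G, φ f' g ∈ B := fun g => by
      simpa [hB, Metric.mem_closedBall, dist_eq_norm] using hbound f' g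
    have hmem0 : (inner ℂ f' f : ℂ) ∈ B := by
      simpa [hB, Metric.mem_closedBall, dist_eq_norm] using hbound0 f'
    set ψ : G → B := fun g => ⟨φ f' g, hmem g⟩ with hψ
    set c0 : B := ⟨(inner ℂ f' f : ℂ), hmem0⟩ with hc0
    have key : ∀ p : Ultrafilter G,
        Filter.Tendsto (φ f') (p : Filter G) (nhds (inner ℂ f' f)) ↔
          Ultrafilter.extend ψ p = c0 := by
      intro p
      rw [ultrafilter_extend_eq_iff]
      have : Filter.Tendsto ψ (p : Filter G) (nhds c0) ↔
          Filter.Tendsto (φ f') (p : Filter G) (nhds (inner ℂ f' f)) := by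
        rw [tendsto_subtype_rng]
      rw [show ↑(Ultrafilter.map ψ p) ≤ nhds c0 ↔
          Filter.Tendsto ψ (p : Filter G) (nhds c0) from Iff.rfl, this]
    have h2 : {p : Ultrafilter G |
        Filter.Tendsto (φ f') (p : Filter G) (nhds (inner ℂ f' f))}
        = (Ultrafilter.extend ψ) ⁻¹' {c0} := by
      ext p; simp [Set.mem_preimage, (key p)]
    rw [h2]
    exact (isClosed_singleton).preimage (continuous_ultrafilter_extend ψ)
  -- S is nonempty
  have hL : (Filter.map gseq Filter.atTop).NeBot := Filter.map_neBot
  set p0 : Ultrafilter G := Ultrafilter.of (Filter.map gseq Filter.atTop) with hp0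
  have hp0le : (p0 : Filter G) ≤ Filter.map gseq Filter.atTop := Ultrafilter.of_le _
  have hp0S : p0 ∈ S := by
    constructor
    · intro x
      apply hp0le
      rw [Filter.mem_map]
      have hfin : {k : ℕ | gseq k ∈ ({x} : Finset G)}.Finite := hgseq {x}
      have : ∀ᶠ k in Filter.cofinite, gseq k ∉ ({x} : Finset G) :=
        hfin.compl_mem_cofinite
      rw [Nat.cofinite_eq_atTop] at this
      filter_upwards [this] with k hk
      simpa using hk
    · intro f'
      refine (Filter.Tendsto.mono_left ?_ hp0le)
      rw [Filter.tendsto_map'_iff]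
      exact hrigid f'
  -- S is closed under addition
  have hSadd : ∀ p ∈ S, ∀ q ∈ S, p + q ∈ S := by
    intro p hp q hq
    obtain ⟨hp1, hp2⟩ := hp
    obtain ⟨hq1, hq2⟩ := hq
    have hqf : Ulim q f = f := (hViff q).mp hq2
    constructor
    · intro x
      have : ∀ᶠ m in ↑(p + q), m ∈ ({x}ᶜ : Set G) := by
        rw [Ultrafilter.eventually_add]
        filter_upwards with g
        have : ∀ᶠ h in ↑q, h ∈ ({x - g}ᶜ : Set G) := hq1 (x - g)
        filter_upwards [this] with h hh
        simp only [Set.mem_compl_iff, Set.mem_singleton_iff] at hh ⊢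
        intro hgh
        exact hh (by rw [← hgh]; abel)
      exact this
    · intro f'
      rw [Metric.tendsto_nhds]
      intro ε hε
      have hεhalf : 0 < ε / 2 := by positivity
      have hp' : ∀ᶠ g in ↑p, dist (φ f' g) (inner ℂ f' f) < ε / 2 :=
        (Metric.tendsto_nhds.mp (hp2 f')) (ε / 2) hεhalf
      have : ∀ᶠ m in ↑(p + q), dist (φ f' m) (inner ℂ f' f) < ε := by
        rw [Ultrafilter.eventually_add]
        filter_upwards [hp'] with g hg
        -- for fixed g, φ f' (g + h) → φ f' g along q
        have hgq : Filter.Tendsto (fun h => φ f' (g + h)) (q : Filter G)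
            (nhds (φ f' g)) := by
          have h1 : ∀ h : G, φ f' (g + h) =
              inner ℂ (ContinuousLinearMap.adjoint (U g) f') (U h f) := by
            intro h
            simp only [hφ, hrep g h, ContinuousLinearMap.comp_apply]
            rw [ContinuousLinearMap.adjoint_inner_left]
          have h2 : (φ f' g : ℂ) =
              inner ℂ (ContinuousLinearMap.adjoint (U g) f') f := by
            simp only [hφ]
            rw [ContinuousLinearMap.adjoint_inner_left]
          simp only [h1, h2]
          have := hUlim q (ContinuousLinearMap.adjoint (U g) f') f
          rwa [hqf] at this
        have : ∀ᶠ h in ↑q, dist (φ f' (g + h)) (φ f' g) < ε / 2 :=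
          (Metric.tendsto_nhds.mp hgq) (ε / 2) hεhalf
        filter_upwards [this] with h hh
        calc dist (φ f' (g + h)) (inner ℂ f' f)
            ≤ dist (φ f' (g + h)) (φ f' g) + dist (φ f' g) (inner ℂ f' f) :=
              dist_triangle _ _ _
          _ < ε / 2 + ε / 2 := by linarith
          _ = ε := by ring
      exact this
  -- apply the Ellis–Numakura lemma
  obtain ⟨m, hmS, hmm⟩ := exists_idempotent_in_compact_add_subsemigroup
    (Ultrafilter.continuous_add_left) S ⟨p0, hp0S⟩
    (hSclosed.isCompact) hSadd
  refine ⟨m, ?_, ?_, (hViff m).mp hmS.2⟩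
  · intro x hx
    have h1 : ({x}ᶜ : Set G) ∈ m := hmS.1 x
    rw [hx] at h1
    rw [Ultrafilter.mem_pure] at h1
    exact h1 rfl
  · rw [ultraAdd_eq_add]; exact hmm
end
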